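/- Let F be a field containing a primitive m-th root of unity γ_m, and S ⊆ Z_m with 0 ∈ S. If there is a subset B of the m-th roots of unity in F with |B| ≤ t having the 0-interpolation property for S, then there exists an S-decoding polynomial over F with at most t monomials. -/

import Mathlib

theorem stmt10 (F : Type*) [Field F] (m : ℕ) (γ : F)
    (hγ1 : γ ^ m = 1) (hγ2 : ∀ i, 1 ≤ i → i < m → γ ^ i ≠ 1)
    (S : Finset ℕ) (hS : ∀ s ∈ S, s < m) (h0 : 0 ∈ S)
    (t : ℕ) (B : Finset F) (hB : ∀ b ∈ B, b ^ m = 1) (hcard : B.card ≤ t)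
    (E : (B → F) → F)
    (hE : ∀ c : ℕ → F, E (fun b => ∑ s ∈ S, c s * (b : F) ^ s) = c 0) :
    ∃ (e : Fin t → F) (d : Fin t → ℕ),
      (∀ s ∈ S, s ≠ 0 → ∑ j, e j * (γ ^ s) ^ (d j) = 0) ∧
      ∑ j, e j * (1 : F) ^ (d j) = 1 := by
  classical
  have hm : 0 < m := hS 0 h0
  have : NeZero m := ⟨hm.ne'⟩
  have hprim : IsPrimitiveRoot γ m := by
    refine ⟨hγ1, fun l hl => ?_⟩
    have h1 : γ ^ (l % m) = 1 := by
      calc γ ^ (l % m) = γ ^ (l % m) * (γ ^ m) ^ (l / m) := by rw [hγ1, one_pow, mul_one]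
        _ = γ ^ (l % m + m * (l / m)) := by rw [pow_add, pow_mul]
        _ = γ ^ l := by rw [Nat.mod_add_div]
        _ = 1 := hl
    have h2 : l % m = 0 := by
      by_contra h
      exact hγ2 (l % m) (Nat.one_le_iff_ne_zero.2 h) (Nat.mod_lt l hm) h1
    exact Nat.dvd_of_mod_eq_zero h2
  -- for each b ∈ B, find d with γ ^ d = b
  have hd : ∀ b : ↥B, ∃ i, γ ^ i = (b : F) := by
    intro b
    obtain ⟨i, _, hi⟩ := hprim.eq_pow_of_pow_eq_one (hB b b.2)
    exact ⟨i, hi⟩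
  choose d0 hd0 using hd
  -- the vector space F^S
  let v : ↥B → (↥S → F) := fun b s => (b : F) ^ (s : ℕ)
  let w : ↥S → F := fun s => if (s : ℕ) = 0 then 1 else 0
  have hw : w ∈ Submodule.span F (Set.range v) := by
    by_contra hniw
    set W := Submodule.span F (Set.range v) with hW
    have hπ : W.mkQ w ≠ 0 := by
      rw [Submodule.mkQ_apply, ne_eq, Submodule.Quotient.mk_eq_zero]
      exact hniw
    obtain ⟨g, hg⟩ : ∃ g : Module.Dual F ((↥S → F) ⧸ W), g (W.mkQ w) ≠ 0 := by
      by_contra h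
      push_neg at h
      exact hπ ((Module.forall_dual_apply_eq_zero_iff F _).1 h)
    set f : (↥S → F) →ₗ[F] F := g.comp W.mkQ with hf
    have hfv : ∀ b : ↥B, f (v b) = 0 := by
      intro b
      have : v b ∈ W := Submodule.subset_span ⟨b, rfl⟩
      simp [hf, Submodule.mkQ_apply, (Submodule.Quotient.mk_eq_zero W).2 this]
    have hfu : ∀ u : ↥S → F, f u = ∑ s : ↥S, u s * f (fun j => if s = j then 1 else 0) := by
      intro u
      conv_lhs => rw [pi_eq_sum_univ u]
      rw [map_sum]
      simp [smul_eq_mul]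
    set c : ℕ → F := fun n => if h : n ∈ S then f (fun j => if (⟨n, h⟩ : ↥S) = j then 1 else 0) else 0 with hc
    have hcs : ∀ b : ↥B, ∑ s ∈ S, c s * (b : F) ^ s = 0 := by
      intro b
      rw [← hfv b, hfu (v b), ← Finset.sum_attach S (fun s => c s * (b : F) ^ s)]
      apply Finset.sum_congr rfl
      intro s _
      rw [hc]
      simp only [s.2, dif_pos]
      ring_nf
      rfl
    have h1 : E (fun b => ∑ s ∈ S, c s * (b : F) ^ s) = c 0 := hE c
    have h2 : E (fun b => ∑ s ∈ S, (0 : F) * (b : F) ^ s) = 0 := by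
      simpa using hE (fun _ => 0)
    have h3 : (fun b : ↥B => ∑ s ∈ S, c s * (b : F) ^ s)
        = (fun b : ↥B => ∑ s ∈ S, (0 : F) * (b : F) ^ s) := by
      funext b
      simp [hcs b]
    rw [h3, h2] at h1
    apply hg
    have hwc : c 0 = f w := by
      rw [hc]
      simp only [h0, dif_pos]
      congr 1
      funext j
      simp only [w]
      by_cases hj : (j : ℕ) = 0
      · rw [if_pos hj, if_pos (Subtype.ext hj.symm)]
      · rw [if_neg hj, if_neg (fun h => hj (by rw [← h]))]
    rw [hwc] at h1
    simpa [hf] using h1.symm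
  obtain ⟨e0, he0⟩ := (Submodule.mem_span_range_iff_exists_fun F).1 hw
  -- key: for all s ∈ S, ∑ b, e0 b * b^s = if s = 0 then 1 else 0
  have hkey : ∀ s : ↥S, ∑ b : ↥B, e0 b * (b : F) ^ (s : ℕ)
      = if (s : ℕ) = 0 then 1 else 0 := by
    intro s
    have := congrFun he0 s
    simpa [v, w, smul_eq_mul] using this
  -- pad to Fin t
  let e : Fin t → F := fun j => if h : (j : ℕ) < B.card then e0 (B.equivFin.symm ⟨j, h⟩) else 0
  let d : Fin t → ℕ := fun j => if h : (j : ℕ) < B.card then d0 (B.equivFin.symm ⟨j, h⟩) else 0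
  have hsum : ∀ x : F, ∑ j : Fin t, e j * x ^ (d j) = ∑ b : ↥B, e0 b * x ^ (d0 b) := by
    intro x
    set g : ℕ → F := fun n =>
      if h : n < B.card then e0 (B.equivFin.symm ⟨n, h⟩) * x ^ d0 (B.equivFin.symm ⟨n, h⟩)
      else 0 with hg
    have h1 : ∑ j : Fin t, e j * x ^ (d j) = ∑ j : Fin t, g (j : ℕ) := by
      apply Finset.sum_congr rfl
      intro j _
      by_cases h : (j : ℕ) < B.card
      · simp [e, d, hg, h]
      · simp [e, d, hg, h]
    rw [h1, Fin.sum_univ_eq_sum_range g t,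
      ← Finset.sum_subset (Finset.range_subset_range.2 hcard) (by
        intro n _ hn
        rw [Finset.mem_range, not_lt] at hn
        simp [hg, Nat.not_lt.2 hn]),
      ← Fin.sum_univ_eq_sum_range g B.card]
    rw [← Equiv.sum_comp B.equivFin.symm (fun b => e0 b * x ^ (d0 b))]
    apply Finset.sum_congr rfl
    intro j _
    simp [hg, j.isLt]
  refine ⟨e, d, ?_, ?_⟩
  · intro s hs hs0
    rw [hsum (γ ^ s)]
    have : ∀ b : ↥B, (γ ^ s) ^ (d0 b) = (b : F) ^ s := by
      intro b
      rw [← pow_mul, mul_comm, pow_mul, hd0 b]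
    simp_rw [this]
    rw [hkey ⟨s, hs⟩]
    simp [hs0]
  · rw [hsum 1]
    have := hkey ⟨0, h0⟩
    simpa using this
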